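/- Let (X, a) be an (L,V)-category. Then the free V-category on lists, (LX, La ∘ m_X°), is a V-category: 1_{LX} ≤ La ∘ m_X° and (La ∘ m_X°) ∘ (La ∘ m_X°) ≤ La ∘ m_X°, where m_X : L²X → LX is list concatenation regarded as a V-relation. -/

import Mathlib

variable {V : Type*} [CommMonoid V] [CompleteLattice V]

/-- The extension of the list monad to `V`-relations. -/
def Lrel {X Y : Type*} (r : X → Y → V) : List X → List Y → V
  | [], [] => 1
  | x :: xs, y :: ys => r x y * Lrel r xs ys
  | [], _ :: _ => ⊥
  | _ :: _, [] => ⊥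

/-- The `V`-relation `La ∘ m_X° : LX ⇸ LX`, where `m_X` is list concatenation. -/
def freeStr {X : Type*} (a : List X → X → V) : List X → List X → V :=
  fun xs ys => ⨆ l : List (List X), (⨆ _ : l.flatten = xs, (1 : V)) * Lrel a l ys

section Aux

open IsQuantale

variable [IsQuantale V]

private lemma qmul_iSup {ι : Sort*} (x : V) (f : ι → V) :
    x * (⨆ i, f i) = ⨆ i, x * f i := by
  rw [iSup, mul_sSup_distrib, iSup_range]

private lemma qiSup_mul {ι : Sort*} (x : V) (f : ι → V) :
    (⨆ i, f i) * x = ⨆ i, f i * x := by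
  rw [iSup, sSup_mul_distrib, iSup_range]

private lemma qmul_bot (x : V) : x * (⊥ : V) = ⊥ := by
  rw [show (⊥ : V) = ⨆ _ : False, (1 : V) by simp, qmul_iSup]
  simp

private lemma qbot_mul (x : V) : (⊥ : V) * x = ⊥ := by
  rw [show (⊥ : V) = ⨆ _ : False, (1 : V) by simp, qiSup_mul]
  simp

private lemma qmul_le_mul {x x' y y' : V} (h1 : x ≤ x') (h2 : y ≤ y') :
    x * y ≤ x' * y' := by
  calc x * y ≤ x' * y := by
        rw [show x' = x ⊔ x' from (sup_eq_right.mpr h1).symm, Quantale.sup_mul_distrib]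
        exact le_sup_left
    _ ≤ x' * y' := by
        rw [show y' = y ⊔ y' from (sup_eq_right.mpr h2).symm, Quantale.mul_sup_distrib]
        exact le_sup_left

private lemma prop_mul_le {P : Prop} {Q R : V} (h : P → Q ≤ R) :
    (⨆ _ : P, (1 : V)) * Q ≤ R := by
  rw [qiSup_mul]
  exact iSup_le fun hp => by rw [one_mul]; exact h hp

private lemma le_prop_mul {P : Prop} (hp : P) {Q R : V} (h : R ≤ Q) :
    R ≤ (⨆ _ : P, (1 : V)) * Q := by
  calc R ≤ (1 : V) * Q := by rw [one_mul]; exact h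
    _ ≤ _ := qmul_le_mul (le_iSup (fun _ : P => (1 : V)) hp) le_rfl

private lemma freeStr_of {X : Type*} (a : List X → X → V) {l : List (List X)} {xs : List X}
    (h : l.flatten = xs) (ys : List X) : Lrel a l ys ≤ freeStr a xs ys := by
  refine le_trans (le_prop_mul h le_rfl) ?_
  exact le_iSup (fun l : List (List X) => (⨆ _ : l.flatten = xs, (1 : V)) * Lrel a l ys) l

/-- Splitting lemma. -/
private lemma lrel_split {X : Type*} (a : List X → X → V) :
    ∀ (u : List X) (l : List (List X)) (v : List X),
      Lrel a l (u ++ v) ≤ ⨆ p : List (List X) × List (List X),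
        (⨆ _ : l = p.1 ++ p.2, (1 : V)) * (Lrel a p.1 u * Lrel a p.2 v)
  | [], l, v => by
      refine le_trans ?_ (le_iSup (fun p : List (List X) × List (List X) =>
        (⨆ _ : l = p.1 ++ p.2, (1 : V)) * (Lrel a p.1 ([] : List X) * Lrel a p.2 v))
        (([] : List (List X)), l))
      refine le_prop_mul rfl ?_
      rw [show Lrel a ([] : List (List X)) ([] : List X) = (1 : V) from rfl, one_mul]
      exact le_rfl
  | y :: u', [], v => by
      rw [show Lrel a ([] : List (List X)) ((y :: u') ++ v) = ⊥ from rfl]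
      exact bot_le
  | y :: u', w :: l', v => by
      rw [show Lrel a (w :: l') ((y :: u') ++ v) = a w y * Lrel a l' (u' ++ v) from rfl]
      refine le_trans (qmul_le_mul le_rfl (lrel_split a u' l' v)) ?_
      rw [qmul_iSup]
      refine iSup_le fun p => ?_
      refine le_trans (le_of_eq (mul_left_comm _ _ _)) ?_
      refine prop_mul_le fun hp => ?_
      refine le_trans ?_ (le_iSup (fun p : List (List X) × List (List X) =>
        (⨆ _ : w :: l' = p.1 ++ p.2, (1 : V)) * (Lrel a p.1 (y :: u') * Lrel a p.2 v))
        ((w :: p.1), p.2))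
      refine le_prop_mul (by rw [hp]; rfl) ?_
      exact le_of_eq (mul_assoc _ _ _).symm

private lemma cons_freeStr {X : Type*} (a : List X → X → V) (w : List X) (z : X)
    (ws zs' : List X) : a w z * freeStr a ws zs' ≤ freeStr a (w ++ ws) (z :: zs') := by
  rw [freeStr, qmul_iSup]
  refine iSup_le fun n => ?_
  refine le_trans (le_of_eq (mul_left_comm _ _ _)) ?_
  refine prop_mul_le fun hn => ?_
  exact freeStr_of a (l := w :: n) (xs := w ++ ws)
    (by rw [List.flatten_cons, hn]) (z :: zs')

end Aux

/-- For an `(L,V)`-category `(X, a)`, the pair `(LX, La ∘ m_X°)` is a `V`-category. -/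
theorem free_vcat_on_lists
    [IsQuantale V] {X : Type*}
    (a : List X → X → V)
    -- e_X° ≤ a
    (hunit : ∀ (xs : List X) (y : X), (⨆ _ : xs = [y], (1 : V)) ≤ a xs y)
    -- a • a ≤ a, where (a • a)(x̲, y) = ⨆ z̲, (La ∘ m_X°)(x̲, z̲) ⊗ a(z̲, y)
    (hcomp : ∀ (xs : List X) (y : X),
        (⨆ zs : List X, freeStr a xs zs * a zs y) ≤ a xs y) :
    -- 1_{LX} ≤ La ∘ m_X°
    (∀ xs ys : List X, (⨆ _ : xs = ys, (1 : V)) ≤ freeStr a xs ys) ∧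
    -- (La ∘ m_X°) ∘ (La ∘ m_X°) ≤ La ∘ m_X°
    (∀ xs zs : List X,
        (⨆ ys : List X, freeStr a xs ys * freeStr a ys zs) ≤ freeStr a xs zs) := by
  have ha1 : ∀ y : X, (1 : V) ≤ a [y] y := fun y =>
    (le_iSup (fun _ : ([y] : List X) = [y] => (1 : V)) rfl).trans (hunit [y] y)
  have hrefl : ∀ ys : List X, (1 : V) ≤ Lrel a (ys.map fun y => [y]) ys := by
    intro ys
    induction ys with
    | nil => exact le_rfl
    | cons y ys ih =>
        calc (1 : V) = 1 * 1 := (one_mul 1).symm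
          _ ≤ a [y] y * Lrel a (ys.map fun y => [y]) ys := qmul_le_mul (ha1 y) ih
          _ = Lrel a ((y :: ys).map fun y => [y]) (y :: ys) := rfl
  have hmain : ∀ (m : List (List X)) (zs : List X) (l : List (List X)),
      Lrel a l m.flatten * Lrel a m zs ≤ freeStr a l.flatten zs := by
    intro m
    induction m with
    | nil =>
        intro zs l
        cases zs with
        | nil =>
            cases l with
            | nil =>
                rw [show Lrel a ([] : List (List X)) (([] : List (List X)).flatten) = (1 : V)
                  from rfl, show Lrel a ([] : List (List X)) ([] : List X) = (1 : V) from rfl,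
                  one_mul]
                exact le_trans (le_of_eq (show (1 : V) =
                  Lrel a ([] : List (List X)) ([] : List X) from rfl)) (freeStr_of a rfl _)
            | cons w l' =>
                rw [show (([] : List (List X)).flatten) = ([] : List X) from rfl,
                  show Lrel a (w :: l') ([] : List X) = ⊥ from rfl, qbot_mul]
                exact bot_le
        | cons z zs' =>
            rw [show Lrel a ([] : List (List X)) (z :: zs') = ⊥ from rfl, qmul_bot]
            exact bot_le
    | cons w m' ih =>
        intro zs l
        cases zs with
        | nil =>
            rw [show Lrel a (w :: m') ([] : List X) = ⊥ from rfl, qmul_bot]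
            exact bot_le
        | cons z zs' =>
            rw [show Lrel a (w :: m') (z :: zs') = a w z * Lrel a m' zs' from rfl,
              show (w :: m').flatten = w ++ m'.flatten from rfl]
            refine le_trans (qmul_le_mul (lrel_split a w l m'.flatten) le_rfl) ?_
            rw [qiSup_mul]
            refine iSup_le fun p => ?_
            refine le_trans (le_of_eq (mul_assoc _ _ _)) ?_
            refine prop_mul_le fun hp => ?_
            have h1 : Lrel a p.1 w * a w z ≤ a p.1.flatten z := by
              refine le_trans ?_ (hcomp p.1.flatten z)
              refine le_trans ?_ (le_iSup (fun ws => freeStr a p.1.flatten ws * a ws z) w)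
              exact qmul_le_mul (freeStr_of a rfl w) le_rfl
            have h2 : Lrel a p.2 m'.flatten * Lrel a m' zs' ≤
                freeStr a p.2.flatten zs' := ih zs' p.2
            calc (Lrel a p.1 w * Lrel a p.2 m'.flatten) * (a w z * Lrel a m' zs')
                = (Lrel a p.1 w * a w z) * (Lrel a p.2 m'.flatten * Lrel a m' zs') := by
                  rw [mul_assoc, mul_assoc]
                  congr 1
                  rw [← mul_assoc, ← mul_assoc, mul_comm (Lrel a p.2 m'.flatten) (a w z)]
              _ ≤ a p.1.flatten z * freeStr a p.2.flatten zs' := qmul_le_mul h1 h2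
              _ ≤ freeStr a (p.1.flatten ++ p.2.flatten) (z :: zs') :=
                  cons_freeStr a _ z _ zs'
              _ = freeStr a l.flatten (z :: zs') := by rw [hp]; simp
  constructor
  · intro xs ys
    refine iSup_le fun h => ?_
    subst h
    refine le_trans (hrefl xs) (freeStr_of a ?_ xs)
    induction xs with
    | nil => rfl
    | cons x xs ihx => rw [List.map_cons, List.flatten_cons, ihx]; rfl
  · intro xs zs
    refine iSup_le fun ys => ?_
    rw [freeStr, qiSup_mul]
    refine iSup_le fun l => ?_
    refine le_trans (le_of_eq (mul_assoc _ _ _)) ?_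
    refine prop_mul_le fun hl => ?_
    rw [freeStr, qmul_iSup]
    refine iSup_le fun m => ?_
    refine le_trans (le_of_eq (mul_left_comm _ _ _)) ?_
    refine prop_mul_le fun hm => ?_
    subst hl
    rw [← hm]
    exact hmain m zs l
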